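/- In the discrete-generation model with m(θ,φ) = e^{-φ}(1/(1+θ₁) + 1/(1+θ₂)), the function α(θ) = log(1/(1+θ₁) + 1/(1+θ₂)) (for θ₁,θ₂ > -1) has Legendre transform α*(a) = inf_θ (a·θ + α(θ)) = 1 - a₁ - a₂ + 2 log(√a₁ + √a₂) for a₁, a₂ > 0. -/

import Mathlib

open Real

theorem stmt_10 (a₁ a₂ : ℝ) (h₁ : 0 < a₁) (h₂ : 0 < a₂) :
    IsGLB ((fun θ : ℝ × ℝ => a₁*θ.1 + a₂*θ.2 + Real.log (1/(1+θ.1) + 1/(1+θ.2))) ''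
        {θ : ℝ × ℝ | -1 < θ.1 ∧ -1 < θ.2})
      (1 - a₁ - a₂ + 2 * Real.log (Real.sqrt a₁ + Real.sqrt a₂)) := by
  have hs1 : 0 < Real.sqrt a₁ := Real.sqrt_pos.2 h₁
  have hs2 : 0 < Real.sqrt a₂ := Real.sqrt_pos.2 h₂
  have hq1 : Real.sqrt a₁ ^ 2 = a₁ := Real.sq_sqrt h₁.le
  have hq2 : Real.sqrt a₂ ^ 2 = a₂ := Real.sq_sqrt h₂.le
  set s : ℝ := Real.sqrt a₁ + Real.sqrt a₂ with hs
  have hspos : 0 < s := by positivity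
  constructor
  · -- lower bound
    rintro v ⟨θ, ⟨hθ1, hθ2⟩, rfl⟩
    have hx1 : 0 < 1 + θ.1 := by linarith
    have hx2 : 0 < 1 + θ.2 := by linarith
    set x₁ : ℝ := 1 + θ.1 with hx1d
    set x₂ : ℝ := 1 + θ.2 with hx2d
    have hAp : 0 < a₁ * x₁ + a₂ * x₂ := by positivity
    have hTp : 0 < 1 / x₁ + 1 / x₂ := by positivity
    have hCS : s ^ 2 ≤ (a₁ * x₁ + a₂ * x₂) * (1 / x₁ + 1 / x₂) := by
      rw [div_add_div _ _ (ne_of_gt hx1) (ne_of_gt hx2), ← mul_div_assoc,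
        le_div_iff₀ (mul_pos hx1 hx2)]
      have hssq : s ^ 2 = a₁ + 2 * (Real.sqrt a₁ * Real.sqrt a₂) + a₂ := by
        rw [hs]; nlinarith [hq1, hq2]
      have key : 0 ≤ a₁ * x₁ ^ 2 + a₂ * x₂ ^ 2 - 2 * (Real.sqrt a₁ * Real.sqrt a₂) * (x₁ * x₂) := by
        have h := sq_nonneg (Real.sqrt a₁ * x₁ - Real.sqrt a₂ * x₂)
        nlinarith [hq1, hq2]
      rw [hssq]
      nlinarith [key]
    have hlogT : Real.log (s ^ 2) - Real.log (a₁ * x₁ + a₂ * x₂)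
        ≤ Real.log (1 / x₁ + 1 / x₂) := by
      rw [← Real.log_div (by positivity) (ne_of_gt hAp)]
      exact Real.log_le_log (by positivity) ((div_le_iff₀ hAp).2 (by linarith))
    have hlogA : Real.log (a₁ * x₁ + a₂ * x₂) ≤ (a₁ * x₁ + a₂ * x₂) - 1 :=
      Real.log_le_sub_one_of_pos hAp
    have hlogs : Real.log (s ^ 2) = 2 * Real.log s := by
      rw [sq, Real.log_mul (ne_of_gt hspos) (ne_of_gt hspos)]; ring
    have h1 : a₁ * θ.1 = a₁ * x₁ - a₁ := by rw [hx1d]; ring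
    have h2 : a₂ * θ.2 = a₂ * x₂ - a₂ := by rw [hx2d]; ring
    simp only [h1, h2]
    rw [hlogs] at hlogT
    linarith
  · -- the value is attained
    intro b hb
    refine hb ⟨(1 / (Real.sqrt a₁ * s) - 1, 1 / (Real.sqrt a₂ * s) - 1), ⟨?_, ?_⟩, ?_⟩
    · show -1 < 1 / (Real.sqrt a₁ * s) - 1
      have : 0 < 1 / (Real.sqrt a₁ * s) := by positivity
      linarith
    · show -1 < 1 / (Real.sqrt a₂ * s) - 1
      have : 0 < 1 / (Real.sqrt a₂ * s) := by positivity
      linarith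
    · show a₁ * (1 / (Real.sqrt a₁ * s) - 1) + a₂ * (1 / (Real.sqrt a₂ * s) - 1)
        + Real.log (1 / (1 + (1 / (Real.sqrt a₁ * s) - 1)) + 1 / (1 + (1 / (Real.sqrt a₂ * s) - 1)))
        = 1 - a₁ - a₂ + 2 * Real.log s
      have e1 : 1 + (1 / (Real.sqrt a₁ * s) - 1) = 1 / (Real.sqrt a₁ * s) := by ring
      have e2 : 1 + (1 / (Real.sqrt a₂ * s) - 1) = 1 / (Real.sqrt a₂ * s) := by ring
      rw [e1, e2, one_div_one_div, one_div_one_div]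
      have e3 : Real.sqrt a₁ * s + Real.sqrt a₂ * s = s * s := by rw [hs]; ring
      rw [e3, Real.log_mul (ne_of_gt hspos) (ne_of_gt hspos)]
      have e4 : a₁ * (1 / (Real.sqrt a₁ * s) - 1) = Real.sqrt a₁ / s - a₁ := by
        field_simp
        nlinarith [hq1]
      have e5 : a₂ * (1 / (Real.sqrt a₂ * s) - 1) = Real.sqrt a₂ / s - a₂ := by
        field_simp
        nlinarith [hq2]
      rw [e4, e5]
      have e6 : Real.sqrt a₁ / s + Real.sqrt a₂ / s = 1 := by
        rw [← add_div, hs, div_self (ne_of_gt hspos)]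
      linarith
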